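/- For all n ≥ 1, k ≥ 0, a multiset P of positive integer block sizes, and m ≥ 0, F(n,k,P,m) = F(n, k+1, P, m+1) - F(n, k+1, P, m). -/

import Mathlib

/-- The ground set: `n` main blocks, the `i`-th of size `p i`, plus an
additional block of size `m`. -/
abbrev InsetGround (n : ℕ) (p : Fin n → ℕ) (m : ℕ) : Type :=
  (Σ i : Fin n, Fin (p i)) ⊕ Fin m

/-- `F n p m k` is the number of `(n+k)`-subsets of the ground set that
intersect every main block (the "(n+k)-insets"). -/
def F (n : ℕ) (p : Fin n → ℕ) (m k : ℕ) : ℕ :=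
  ((Finset.univ : Finset (Finset (InsetGround n p m))).filter
    (fun U => U.card = n + k ∧
      ∀ i : Fin n, ∃ x : Σ j : Fin n, Fin (p j), x.1 = i ∧ Sum.inl x ∈ U)).card

theorem stmt_7 (n : ℕ) (hn : 1 ≤ n) (k m : ℕ) (p : Fin n → ℕ)
    (hp : ∀ i, 1 ≤ p i) :
    (F n p m k : ℤ) = (F n p (m + 1) (k + 1) : ℤ) - (F n p m (k + 1) : ℤ) := by
  classical
  suffices key : F n p (m+1) (k+1) = F n p m k + F n p m (k+1) by
    rw [key]; push_cast; ring
  set a : InsetGround n p (m+1) := Sum.inr (Fin.last m) with ha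
  have hinj : Function.Injective (Sum.map (id : (Σ i : Fin n, Fin (p i)) → _)
      (Fin.castSucc : Fin m → Fin (m+1))) :=
    Function.Injective.sumMap (fun _ _ h => h) (Fin.castSucc_injective m)
  set e : InsetGround n p m ↪ InsetGround n p (m+1) := ⟨_, hinj⟩ with he
  have hfa : ∀ x, e x ≠ a := by
    rintro (x | x) h
    · simp [he, ha] at h
    · simp only [he, ha, Function.Embedding.coeFn_mk, Sum.map_inr, Sum.inr.injEq] at h
      exact (Fin.castSucc_lt_last x).ne h
  have hrange : ∀ y : InsetGround n p (m+1), y ≠ a → ∃ x, e x = y := by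
    rintro (y | y) h
    · exact ⟨Sum.inl y, rfl⟩
    · have hy : y ≠ Fin.last m := fun hy => h (by rw [ha, hy])
      exact ⟨Sum.inr (y.castPred hy), by simp [he, Sum.map, Fin.castSucc_castPred]⟩
  -- membership of `inl` elements in mapped sets
  have hmem : ∀ (U : Finset (InsetGround n p m)) (x : Σ j : Fin n, Fin (p j)),
      Sum.inl x ∈ U.map e ↔ Sum.inl x ∈ U := by
    intro U x
    simp only [Finset.mem_map]
    constructor
    · rintro ⟨(z | z), hz, hze⟩
      · simp only [he, Function.Embedding.coeFn_mk, Sum.map_inl, id_eq, Sum.inl.injEq] at hze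
        rwa [← hze]
      · simp [he] at hze
    · intro hx; exact ⟨Sum.inl x, hx, rfl⟩
  have hanm : ∀ U : Finset (InsetGround n p m), a ∉ U.map e := by
    intro U hU
    obtain ⟨z, _, hz⟩ := Finset.mem_map.mp hU
    exact hfa z hz
  have hcover : ∀ V : Finset (InsetGround n p (m+1)), a ∉ V →
      (V.preimage e (e.injective.injOn)).map e = V := by
    intro V haV
    rw [Finset.map_eq_image, Finset.image_preimage]
    apply Finset.filter_true_of_mem
    intro y hy
    exact hrange y (fun h => haV (h ▸ hy))
  have hsplit := Finset.card_filter_add_card_filter_not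
    (s := (Finset.univ : Finset (Finset (InsetGround n p (m+1)))).filter
      (fun U => U.card = n + (k+1) ∧
        ∀ i : Fin n, ∃ x : Σ j : Fin n, Fin (p j), x.1 = i ∧ Sum.inl x ∈ U))
    (p := fun U => a ∈ U)
  rw [Finset.filter_filter, Finset.filter_filter] at hsplit
  have h1 : ((Finset.univ : Finset (Finset (InsetGround n p (m+1)))).filter
      (fun U => (U.card = n + (k+1) ∧
        ∀ i : Fin n, ∃ x : Σ j : Fin n, Fin (p j), x.1 = i ∧ Sum.inl x ∈ U) ∧ a ∈ U)).card
      = F n p m k := by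
    rw [F]
    apply Finset.card_nbij' (fun V => (V.erase a).preimage e (e.injective.injOn))
      (fun U => insert a (U.map e))
    · intro V hV
      simp only [Finset.mem_coe, Finset.mem_filter, Finset.mem_univ, true_and] at hV ⊢
      obtain ⟨⟨hcard, hins⟩, haV⟩ := hV
      have haE : a ∉ V.erase a := Finset.notMem_erase a V
      have hc := hcover (V.erase a) haE
      constructor
      · have := Finset.card_map e (s := (V.erase a).preimage e (e.injective.injOn))
        rw [hc] at this
        rw [← this, Finset.card_erase_of_mem haV, hcard]; omega
      · intro i
        obtain ⟨x, hx1, hx2⟩ := hins i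
        refine ⟨x, hx1, ?_⟩
        rw [Finset.mem_preimage]
        have : (e (Sum.inl x)) = Sum.inl x := rfl
        rw [this, Finset.mem_erase]
        exact ⟨by simp [ha], hx2⟩
    · intro U hU
      simp only [Finset.mem_coe, Finset.mem_filter, Finset.mem_univ, true_and] at hU ⊢
      obtain ⟨hcard, hins⟩ := hU
      refine ⟨⟨?_, ?_⟩, Finset.mem_insert_self a _⟩
      · rw [Finset.card_insert_of_notMem (hanm U), Finset.card_map, hcard]; omega
      · intro i
        obtain ⟨x, hx1, hx2⟩ := hins i
        exact ⟨x, hx1, Finset.mem_insert_of_mem ((hmem U x).mpr hx2)⟩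
    · intro V hV
      simp only [Finset.mem_coe, Finset.mem_filter, Finset.mem_univ, true_and] at hV
      beta_reduce
      rw [hcover (V.erase a) (Finset.notMem_erase a V), Finset.insert_erase hV.2]
    · intro U hU
      have h1 : (insert a (U.map e)).erase a = U.map e :=
        Finset.erase_insert (hanm U)
      beta_reduce
      rw [h1]
      ext x
      rw [Finset.mem_preimage, Finset.mem_map']
  have h2 : ((Finset.univ : Finset (Finset (InsetGround n p (m+1)))).filter
      (fun U => (U.card = n + (k+1) ∧
        ∀ i : Fin n, ∃ x : Σ j : Fin n, Fin (p j), x.1 = i ∧ Sum.inl x ∈ U) ∧ ¬ a ∈ U)).card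
      = F n p m (k+1) := by
    rw [F]
    apply Finset.card_nbij' (fun V => V.preimage e (e.injective.injOn))
      (fun U => U.map e)
    · intro V hV
      simp only [Finset.mem_coe, Finset.mem_filter, Finset.mem_univ, true_and] at hV ⊢
      obtain ⟨⟨hcard, hins⟩, haV⟩ := hV
      constructor
      · have := Finset.card_map e (s := V.preimage e (e.injective.injOn))
        rw [hcover V haV] at this
        rw [← this, hcard]
      · intro i
        obtain ⟨x, hx1, hx2⟩ := hins i
        refine ⟨x, hx1, ?_⟩
        rw [Finset.mem_preimage]
        exact hx2
    · intro U hU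
      simp only [Finset.mem_coe, Finset.mem_filter, Finset.mem_univ, true_and] at hU ⊢
      obtain ⟨hcard, hins⟩ := hU
      refine ⟨⟨?_, ?_⟩, hanm U⟩
      · rw [Finset.card_map, hcard]
      · intro i
        obtain ⟨x, hx1, hx2⟩ := hins i
        exact ⟨x, hx1, (hmem U x).mpr hx2⟩
    · intro V hV
      simp only [Finset.mem_coe, Finset.mem_filter, Finset.mem_univ, true_and] at hV
      exact hcover V hV.2
    · intro U _
      ext x
      rw [Finset.mem_preimage, Finset.mem_map']
  rw [F, ← hsplit, h1, h2]
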